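/- In the setting of odd-cardinality-line geometries, the sum over all assignments a : V → F₂ of e^{i ℓ(a) · 2π/|L|} is a real number. -/
import Mathlib


open Real Complex

/-- The number of invalid lines of an assignment `a`. -/
def invalidCount {V ι : Type*} [DecidableEq V] [Fintype ι]
    (line : ι → Finset V) (s : ι → ZMod 2) (a : V → ZMod 2) : ℕ :=
  (Finset.univ.filter fun i => ∑ v ∈ line i, a v ≠ s i).card

lemma invalidCount_flip {V ι : Type*} [DecidableEq V] [Fintype ι]
    (line : ι → Finset V) (s : ι → ZMod 2)
    (hodd : ∀ i, Odd (line i).card) (a : V → ZMod 2) :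
    invalidCount line s (a + 1) = Fintype.card ι - invalidCount line s a := by
  classical
  have h2 : ∀ x y : ZMod 2, (x + 1 ≠ y) ↔ ¬ (x ≠ y) := by decide
  have hsum : ∀ i, (∑ v ∈ line i, (a + 1) v) = (∑ v ∈ line i, a v) + 1 := by
    intro i
    have hc : ((line i).card : ZMod 2) = 1 := by
      rw [← ZMod.natCast_mod, Nat.odd_iff.mp (hodd i)]
      norm_num
    simp only [Pi.add_apply, Pi.one_apply, Finset.sum_add_distrib,
      Finset.sum_const, nsmul_eq_mul, hc, mul_one]
  unfold invalidCount
  have : (Finset.univ.filter fun i => ∑ v ∈ line i, (a + 1) v ≠ s i)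
      = Finset.univ.filter fun i => ¬ (∑ v ∈ line i, a v ≠ s i) := by
    apply Finset.filter_congr
    intro i _
    rw [hsum i]
    exact h2 _ _
  rw [this, Finset.filter_not, Finset.card_sdiff_of_subset (Finset.filter_subset _ _),
    Finset.card_univ]

/-- For a geometry with odd-cardinality lines, the sum over all assignments
of the quasi-Grover phases `e^{i ℓ(a)·2π/|L|}` is a real number. -/
theorem phase_sum_real {V ι : Type*} [Fintype V] [DecidableEq V] [Fintype ι]
    (line : ι → Finset V) (s : ι → ZMod 2)
    (hodd : ∀ i, Odd (line i).card) :
    (∑ a : V → ZMod 2,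
      Complex.exp (Complex.I * (invalidCount line s a : ℂ) *
        (2 * (Real.pi : ℂ) / (Fintype.card ι : ℂ)))).im = 0 := by
  classical
  by_cases hn : Fintype.card ι = 0
  · haveI := Fintype.card_eq_zero_iff.mp hn
    simp [invalidCount, Finset.univ_eq_empty (α := ι)]
    rw [show (2:ℂ) = ((2:ℝ):ℂ) by norm_num, ← Complex.ofReal_pow, Complex.ofReal_im]
  · rw [← Complex.conj_eq_iff_im]
    rw [map_sum]
    rw [← Equiv.sum_comp (Equiv.addRight (1 : V → ZMod 2))
      (fun a => Complex.exp (Complex.I * (invalidCount line s a : ℂ) *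
        (2 * (Real.pi : ℂ) / (Fintype.card ι : ℂ))))]
    apply Finset.sum_congr rfl
    intro a _
    rw [← Complex.exp_conj]
    simp only [map_mul, map_div₀, Complex.conj_I, map_ofNat, Complex.conj_ofReal,
      Complex.conj_natCast, Equiv.coe_addRight]
    rw [invalidCount_flip line s hodd a]
    have hle : invalidCount line s a ≤ Fintype.card ι :=
      Finset.card_filter_le _ _
    rw [Nat.cast_sub hle]
    have hkey : Complex.I * ((Fintype.card ι : ℂ) - (invalidCount line s a : ℂ)) *
        (2 * (Real.pi : ℂ) / (Fintype.card ι : ℂ))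
        = 2 * (Real.pi : ℂ) * Complex.I +
          -Complex.I * (invalidCount line s a : ℂ) *
            (2 * (Real.pi : ℂ) / (Fintype.card ι : ℂ)) := by
      have hn' : (Fintype.card ι : ℂ) ≠ 0 := Nat.cast_ne_zero.mpr hn
      field_simp
      ring
    rw [hkey, Complex.exp_add, Complex.exp_two_pi_mul_I, one_mul]
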